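/- For any [n,t] linear code C_0 over F_q and any k < t, if q > k·n^k, then there exists an [n,k] maximally recoverable subcode C of C_0. -/

import Mathlib

open Matrix

section Defs
variable {F : Type*} [Field F]

/-- Rank of the submatrix of `G` consisting of the columns indexed by `S`. -/
noncomputable def colRank {m α : Type*} [Fintype α] (G : Matrix m α F) (S : Finset α) : ℕ :=
  (G.submatrix id (fun j : S => (j : α))).rank

/-- The row space of a matrix. -/
def rowSpan {m α : Type*} (G : Matrix m α F) : Submodule F (α → F) :=
  Submodule.span F (Set.range fun i => G i)

/-- Rank of the restriction (puncturing) of a code `C` to the coordinates in `S`. -/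
noncomputable def restrRank {α : Type*} (C : Submodule F (α → F)) (S : Finset α) : ℕ :=
  Module.finrank F (C.map (LinearMap.funLeft F F (fun j : S => (j : α))))

/-- Shortening of a code on coordinates `α ⊕ β` to the coordinates `α`. -/
noncomputable def shortenSum {α β : Type*} (D : Submodule F ((α ⊕ β) → F)) :
    Submodule F (α → F) :=
  Submodule.map (LinearMap.funLeft F F Sum.inl)
    (D ⊓ (⨅ j : β, LinearMap.ker
      (LinearMap.proj (R := F) (Sum.inr j) : ((α ⊕ β) → F) →ₗ[F] F)))

/-- A valid (zero-error, worst case) scheme for the point-to-point function-update problem. -/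
def IsValidScheme [DecidableEq F] {n m ℓ : ℕ} (A : Matrix (Fin m) (Fin n) F)
    (H : Matrix (Fin ℓ) (Fin n) F) (ε : ℕ)
    (D : (Fin ℓ → F) → (Fin m → F) → (Fin m → F)) : Prop :=
  ∀ X E : Fin n → F, hammingNorm E ≤ ε →
    D (H.mulVec (X + E)) (A.mulVec X) = A.mulVec (X + E)

end Defs
section MRSCAux
variable {F : Type*} [Field F]

lemma colRank_eq_finrank_map {m α : Type*} [Finite m] [Fintype α]
    (G : Matrix m α F) (S : Finset α) :
    colRank G S = Module.finrank F
      ((rowSpan G).map (LinearMap.funLeft F F (fun j : S => (j : α)))) := by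
  rw [colRank, Matrix.rank_eq_finrank_span_row, rowSpan, Submodule.map_span, ← Set.range_comp]
  rfl

open Module in
lemma exists_avoid_subspaces {M : Type*} [Fintype F] [AddCommGroup M]
    [Module F M] [Fintype M] {ι : Type*} [DecidableEq ι]
    (V : Submodule F M) (s : Finset ι) (W : ι → Submodule F M)
    (hW : ∀ i ∈ s, W i < V) (hs : s.card ≤ Fintype.card F) :
    ∃ v ∈ V, ∀ i ∈ s, v ∉ W i := by
  classical
  rcases s.eq_empty_or_nonempty with rfl | ⟨i₀, hi₀⟩
  · exact ⟨0, V.zero_mem, by simp⟩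
  set q := Fintype.card F with hqdef
  set r := finrank F V with hrdef
  have hq2 : 2 ≤ q := Fintype.one_lt_card
  have hr : 1 ≤ r := by
    by_contra h
    have hr0 : finrank F V = 0 := by omega
    have : V = ⊥ := Submodule.finrank_eq_zero.mp hr0
    exact absurd ((this ▸ hW i₀ hi₀ : W i₀ < ⊥)) (by simp)
  have hcardW : ∀ i ∈ s, ((W i : Set M)).toFinset.card ≤ q ^ (r - 1) := by
    intro i hi
    rw [Set.toFinset_card]
    rw [show Fintype.card ↑(W i : Set M) = Fintype.card (W i) from Fintype.card_congr' rfl,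
      card_eq_pow_finrank (K := F) (V := W i)]
    exact Nat.pow_le_pow_right (by omega)
      (by have := Submodule.finrank_lt_finrank_of_lt (hW i hi); omega)
  set U : Finset M := s.biUnion (fun i => ((W i : Set M).toFinset.erase 0)) with hU
  have hUcard : U.card ≤ s.card * (q ^ (r - 1) - 1) := by
    refine Finset.card_biUnion_le.trans ?_
    refine (Finset.sum_le_card_nsmul s _ (q ^ (r - 1) - 1) ?_).trans (by simp [mul_comm])
    intro i hi
    have h0 : (0 : M) ∈ (W i : Set M).toFinset := by simp [(W i).zero_mem]
    rw [Finset.card_erase_of_mem h0]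
    have := hcardW i hi
    omega
  have hlt : (insert (0 : M) U).card < (V : Set M).toFinset.card := by
    rw [Set.toFinset_card]
    rw [show Fintype.card ↑(V : Set M) = Fintype.card V from Fintype.card_congr' rfl,
      card_eq_pow_finrank (K := F) (V := V)]
    have h1 : (insert (0 : M) U).card ≤ U.card + 1 := Finset.card_insert_le _ _
    have h2 : s.card * (q ^ (r - 1) - 1) ≤ q * (q ^ (r - 1) - 1) :=
      Nat.mul_le_mul_right _ hs
    have h3 : q ^ r = q * q ^ (r - 1) := by
      rw [← pow_succ']
      congr 1
      omega
    have h4 : 1 ≤ q ^ (r - 1) := Nat.one_le_pow _ _ (by omega)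
    rw [h3]
    have h6 : q ≤ q * q ^ (r - 1) := Nat.le_mul_of_pos_right q (by omega)
    have h5 : q * (q ^ (r - 1) - 1) + q = q * q ^ (r - 1) := by
      rw [Nat.mul_sub, Nat.mul_one]; omega
    omega
  have hns : ¬ ((V : Set M).toFinset ⊆ insert (0 : M) U) :=
    fun h => absurd (Finset.card_le_card h) (not_le.mpr hlt)
  obtain ⟨v, hvV, hv⟩ := Finset.not_subset.mp hns
  refine ⟨v, Set.mem_toFinset.mp hvV, fun i hi hvW => ?_⟩
  have hv0 : v ≠ 0 := fun h => hv (h ▸ Finset.mem_insert_self 0 U)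
  exact hv (Finset.mem_insert_of_mem (Finset.mem_biUnion.mpr
    ⟨i, hi, Finset.mem_erase.mpr ⟨hv0, Set.mem_toFinset.mpr hvW⟩⟩))

end MRSCAux

lemma hfr {F : Type*} [Field F] {β : Type*} [AddCommGroup β] [Module F β] {i : ℕ}
    (f : Fin i → β) : Module.finrank F (Submodule.span F (Set.range f)) ≤ i := by
  have := finrank_range_le_card (R := F) f
  rw [Fintype.card_fin] at this
  exact this

/-- existence of `[n,k]` maximally recoverable subcodes for field size
`q > k·n^k` (Gopalan–Huang–Simitci–Yekhanin). -/
theorem mrsc_exists {F : Type*} [Field F] [Fintype F] {n t k : ℕ} (hk : k < t)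
    (G0 : Matrix (Fin t) (Fin n) F) (hG0 : G0.rank = t)
    (hq : k * n ^ k < Fintype.card F) :
    ∃ G : Matrix (Fin k) (Fin n) F, G.rank = k ∧ (∀ i, G i ∈ rowSpan G0) ∧
      ∀ S : Finset (Fin n), S.card = k → colRank G0 S = k → colRank G S = k := by
  classical
  set V := rowSpan G0 with hVdef
  have hV : Module.finrank F V = t :=
    (Matrix.rank_eq_finrank_span_row G0).symm.trans hG0
  have hVtop : ∀ S : Finset (Fin n), S.card = k → colRank G0 S = k →
      V.map (LinearMap.funLeft F F (fun j : S => (j : Fin n))) = ⊤ := by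
    intro S hSk hSr
    apply Submodule.eq_top_of_finrank_eq
    rw [← colRank_eq_finrank_map, hSr, Module.finrank_fintype_fun_eq_card, Fintype.card_coe, hSk]
  have key : ∀ i, i ≤ k → ∃ g : Fin i → (Fin n → F), (∀ j, g j ∈ V) ∧ LinearIndependent F g ∧
      ∀ S : Finset (Fin n), S.card = k → colRank G0 S = k →
        LinearIndependent F (fun j => LinearMap.funLeft F F (fun j : S => (j : Fin n)) (g j)) := by
    intro i
    induction i with
    | zero =>
      exact fun _ => ⟨fun j => j.elim0, fun j => j.elim0, linearIndependent_empty_type,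
        fun S _ _ => linearIndependent_empty_type⟩
    | succ i ih =>
      intro hik
      obtain ⟨g, hgV, hgind, hgS⟩ := ih (Nat.le_of_succ_le hik)
      set s : Finset (Option (Finset (Fin n))) :=
        insert none ((((Finset.univ : Finset (Fin n)).powersetCard k).filter
          (fun S => colRank G0 S = k)).image some) with hsdef
      set W : Option (Finset (Fin n)) → Submodule F (Fin n → F) := fun o =>
        Option.rec (Submodule.span F (Set.range g))
          (fun S => V ⊓ Submodule.comap (LinearMap.funLeft F F (fun j : S => (j : Fin n)))
            (Submodule.span F (Set.range
              (fun j => LinearMap.funLeft F F (fun j : S => (j : Fin n)) (g j))))) o with hWdef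
      have hW : ∀ o ∈ s, W o < V := by
        intro o ho
        match o with
        | none =>
          refine lt_of_le_of_ne (Submodule.span_le.mpr (Set.range_subset_iff.mpr hgV)) ?_
          intro heq
          have heq' : Submodule.span F (Set.range g) = V := heq
          have := hfr (F := F) g
          rw [heq', hV] at this
          omega
        | some S =>
          have hmem : S ∈ ((Finset.univ : Finset (Fin n)).powersetCard k).filter
              (fun S => colRank G0 S = k) := by
            rcases Finset.mem_insert.mp ho with h | h
            · exact absurd h (by simp)
            · obtain ⟨S', hS', hSS'⟩ := Finset.mem_image.mp h
              obtain rfl : S' = S := Option.some_injective _ hSS'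
              exact hS'
          obtain ⟨hS1, hS2⟩ := Finset.mem_filter.mp hmem
          have hSk : S.card = k := (Finset.mem_powersetCard_univ).mp hS1
          refine lt_of_le_of_ne inf_le_left ?_
          intro heq
          have h1 : V ≤ Submodule.comap (LinearMap.funLeft F F (fun j : S => (j : Fin n)))
              (Submodule.span F (Set.range
                (fun j => LinearMap.funLeft F F (fun j : S => (j : Fin n)) (g j)))) :=
            inf_eq_left.mp heq
          have h2 := Submodule.map_le_iff_le_comap.mpr h1
          rw [hVtop S hSk hS2] at h2
          have h3 : Submodule.span F (Set.range
              (fun j => LinearMap.funLeft F F (fun j : S => (j : Fin n)) (g j))) = ⊤ :=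
            le_antisymm le_top h2
          have h4 := hfr (F := F) (fun j => LinearMap.funLeft F F (fun j : S => (j : Fin n)) (g j))
          rw [h3, finrank_top, Module.finrank_fintype_fun_eq_card, Fintype.card_coe, hSk] at h4
          omega
      have hs : s.card ≤ Fintype.card F := by
        have c1 : s.card ≤ ((((Finset.univ : Finset (Fin n)).powersetCard k).filter
            (fun S => colRank G0 S = k)).image some).card + 1 := Finset.card_insert_le _ _
        have c2 := Finset.card_image_le (s := (((Finset.univ : Finset (Fin n)).powersetCard k).filter
            (fun S => colRank G0 S = k))) (f := some)
        have c3 := Finset.card_filter_le ((Finset.univ : Finset (Fin n)).powersetCard k)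
            (fun S => colRank G0 S = k)
        have c4 : ((Finset.univ : Finset (Fin n)).powersetCard k).card = n.choose k := by
          rw [Finset.card_powersetCard, Finset.card_univ, Fintype.card_fin]
        have c5 : n.choose k ≤ n ^ k := Nat.choose_le_pow n k
        have c6 : n ^ k ≤ k * n ^ k := Nat.le_mul_of_pos_left _ (by omega)
        omega
      obtain ⟨v, hvV, hv⟩ := exists_avoid_subspaces V s W hW hs
      have hvnone := hv none (Finset.mem_insert_self _ _)
      refine ⟨Fin.snoc g v, ?_, ?_, ?_⟩
      · intro j
        refine Fin.lastCases ?_ ?_ j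
        · simpa using hvV
        · intro j'; simpa using hgV j'
      · rw [linearIndependent_fin_snoc]
        exact ⟨hgind, hvnone⟩
      · intro S hSk hSr
        have hrw : (fun j => LinearMap.funLeft F F (fun j : S => (j : Fin n)) ((Fin.snoc g v : Fin (i+1) → (Fin n → F)) j))
            = (Fin.snoc (fun j => LinearMap.funLeft F F (fun j : S => (j : Fin n)) (g j))
              (LinearMap.funLeft F F (fun j : S => (j : Fin n)) v) : Fin (i+1) → (S → F)) := by
          funext j
          refine Fin.lastCases ?_ ?_ j <;> simp
        rw [hrw, linearIndependent_fin_snoc]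
        refine ⟨hgS S hSk hSr, fun hmem => ?_⟩
        have hSs : some S ∈ s := by
          refine Finset.mem_insert_of_mem (Finset.mem_image_of_mem _ ?_)
          exact Finset.mem_filter.mpr ⟨Finset.mem_powersetCard_univ.mpr hSk, hSr⟩
        exact hv (some S) hSs ⟨hvV, hmem⟩
  obtain ⟨g, hgV, hgind, hgS⟩ := key k le_rfl
  refine ⟨Matrix.of g, ?_, hgV, ?_⟩
  · have : (Matrix.of g).rank = Fintype.card (Fin k) := LinearIndependent.rank_matrix hgind
    simpa using this
  · intro S hSk hSr
    rw [colRank_eq_finrank_map]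
    have hrs : rowSpan (Matrix.of g) = Submodule.span F (Set.range g) := rfl
    rw [hrs, Submodule.map_span, ← Set.range_comp]
    have := finrank_span_eq_card (R := F) (hgS S hSk hSr)
    rw [Fintype.card_fin] at this
    exact this
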